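/- Let 1 ≤ N < L be integers, set ρ = N/L and 𝕣₀ = ρ^ρ(1−ρ)^{1−ρ} (real powers), and let z ∈ ℂ with 0 < |z| < 𝕣₀. Then the polynomial q_z(w) = w^N(w+1)^{L−N} − z^L has exactly L distinct complex roots, none of which satisfies Re(w) = −ρ; moreover exactly L−N of the roots satisfy Re(w) < −ρ and exactly N of the roots satisfy Re(w) > −ρ. -/

import Mathlib

open scoped BigOperators

lemma nth_root_set (N : ℕ) (hN : 1 ≤ N) (c : ℂ) (hc : c ≠ 0) :
    {ζ : ℂ | ζ ^ N = c}.Finite ∧ {ζ : ℂ | ζ ^ N = c}.ncard = N := by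
  have hN0 : (N : ℕ) ≠ 0 := by omega
  set r := c ^ ((N:ℂ)⁻¹) with hr
  have hrN : r ^ N = c := Complex.cpow_nat_inv_pow c hN0
  have hr0 : r ≠ 0 := by
    intro h
    rw [h, zero_pow hN0] at hrN
    exact hc hrN.symm
  have himg : {ζ : ℂ | ζ ^ N = c} = (fun u => r * u) '' {u : ℂ | u ^ N = 1} := by
    ext ζ
    constructor
    · intro hζ
      refine ⟨ζ / r, ?_, by field_simp⟩
      simp only [Set.mem_setOf_eq] at hζ
      simp only [Set.mem_setOf_eq, div_pow, hζ, hrN, div_self hc]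
    · rintro ⟨u, hu, rfl⟩
      simp only [Set.mem_setOf_eq] at hu ⊢
      rw [mul_pow, hu, mul_one, hrN]
  have hroots : {u : ℂ | u ^ N = 1} = ↑(Polynomial.nthRootsFinset N (1 : ℂ)) := by
    ext u
    rw [Set.mem_setOf_eq, Finset.mem_coe, Polynomial.mem_nthRootsFinset hN]
  have hfin : {u : ℂ | u ^ N = 1}.Finite := by
    rw [hroots]; exact (Polynomial.nthRootsFinset N (1 : ℂ)).finite_toSet
  have hcard : {u : ℂ | u ^ N = 1}.ncard = N := by
    rw [hroots, Set.ncard_coe_finset,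
      (Complex.isPrimitiveRoot_exp N hN0).card_nthRootsFinset]
  constructor
  · rw [himg]; exact hfin.image _
  · rw [himg, Set.ncard_image_of_injective _ (mul_right_injective₀ hr0), hcard]

lemma count_disk (N L : ℕ) (hN : 1 ≤ N) (hNL : N < L)
    (z : ℂ) (hz : z ≠ 0)
    (hzr : ‖z‖ <
      ((N : ℝ) / L) ^ ((N : ℝ) / L) * (1 - (N : ℝ) / L) ^ (1 - (N : ℝ) / L)) :
    {w : ℂ | w ^ N * (w + 1) ^ (L - N) = z ^ L ∧ ‖w‖ < (N : ℝ) / L}.Finite ∧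
    {w : ℂ | w ^ N * (w + 1) ^ (L - N) = z ^ L ∧ ‖w‖ < (N : ℝ) / L}.ncard = N := by
  have hL0 : (0:ℝ) < L := by exact_mod_cast (by omega : 0 < L)
  have hN0 : (0:ℝ) < N := by exact_mod_cast hN
  set ρ : ℝ := (N : ℝ) / L with hρdef
  have hρ0 : 0 < ρ := div_pos hN0 hL0
  have hρ1 : ρ < 1 := (div_lt_one hL0).2 (by exact_mod_cast hNL)
  have h1ρ : 0 < 1 - ρ := by linarith
  set a : ℝ := ((L : ℝ) - N) / N with hadef
  have ha : 0 < a := div_pos (sub_pos.2 (by exact_mod_cast hNL)) hN0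
  have haρ : a * ρ = 1 - ρ := by
    rw [hadef, hρdef]; field_simp
  -- power identities
  have e1 : ((ρ : ℝ) ^ ρ) ^ (L : ℕ) = ρ ^ (N : ℕ) := by
    rw [← Real.rpow_natCast (ρ ^ ρ) L, ← Real.rpow_mul hρ0.le, ← Real.rpow_natCast ρ N]
    congr 1
    rw [hρdef]; field_simp
  have e2 : ((1 - ρ) ^ (1 - ρ)) ^ (L : ℕ) = (1 - ρ) ^ (L - N : ℕ) := by
    rw [← Real.rpow_natCast ((1-ρ) ^ (1-ρ)) L, ← Real.rpow_mul h1ρ.le,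
      ← Real.rpow_natCast (1-ρ) (L - N)]
    congr 1
    rw [Nat.cast_sub hNL.le, hρdef]; field_simp
  have hzL : ‖z‖ ^ L < ρ ^ N * (1 - ρ) ^ (L - N) := by
    have := pow_lt_pow_left₀ hzr (norm_nonneg z) (by omega : L ≠ 0)
    rwa [mul_pow, e1, e2] at this
  set M : ℝ := ρ * (1 - ρ) ^ a with hMdef
  have hM0 : 0 < M := mul_pos hρ0 (Real.rpow_pos_of_pos h1ρ a)
  have hMN : M ^ N = ρ ^ N * (1 - ρ) ^ (L - N : ℕ) := by
    rw [hMdef, mul_pow]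
    congr 1
    rw [← Real.rpow_natCast ((1-ρ) ^ a) N, ← Real.rpow_mul h1ρ.le,
      ← Real.rpow_natCast (1-ρ) (L - N)]
    congr 1
    rw [Nat.cast_sub hNL.le, hadef]; field_simp
  -- lower bound for |w+1|
  have habs1 : ∀ w : ℂ, ‖w‖ ≤ ρ → 1 - ρ ≤ ‖w + 1‖ := by
    intro w hw
    have h := norm_add_le (w + 1) (-w)
    simp only [add_neg_cancel_left, map_one, norm_neg] at h
    -- h : ‖1‖ ≤ abs (w+1) + abs w  (roughly)
    have h1 : (1:ℝ) ≤ ‖w + 1‖ + ‖w‖ := by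
      have : w + 1 + -w = 1 := by ring
      rw [this] at h
      simpa using h
    linarith
  have hne : ∀ w : ℂ, ‖w‖ ≤ ρ → w + 1 ≠ 0 := by
    intro w hw h0
    have := habs1 w hw
    rw [h0] at this
    simp at this
    linarith
  have hslit : ∀ w : ℂ, ‖w‖ ≤ ρ → w + 1 ∈ Complex.slitPlane := by
    intro w hw
    refine Complex.mem_slitPlane_iff.mpr (Or.inl ?_)
    have h := Complex.abs_re_le_norm w
    have h2 : -ρ ≤ w.re := by
      have := (abs_le.1 (h.trans hw)).1
      linarith
    simp only [Complex.add_re, Complex.one_re]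
    linarith
  -- φ
  set φ : ℂ → ℂ := fun w => w * (w + 1) ^ ((a : ℂ)) with hφdef
  have hφpow : ∀ w : ℂ, (φ w) ^ N = w ^ N * (w + 1) ^ (L - N) := by
    intro w
    have hNa : ((N : ℂ)) * ((a : ℝ) : ℂ) = ((L - N : ℕ) : ℂ) := by
      have hNC : (N : ℂ) ≠ 0 := Nat.cast_ne_zero.2 (by omega)
      rw [hadef, Nat.cast_sub hNL.le]
      push_cast
      field_simp
    rw [hφdef]
    simp only
    rw [mul_pow, ← Complex.cpow_nat_mul, hNa, Complex.cpow_natCast]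
  -- key existence/uniqueness of fixed points
  have key : ∀ ζ : ℂ, ‖ζ‖ < M →
      (∃ w : ℂ, ‖w‖ < ρ ∧ ζ * (w + 1) ^ (-(a : ℂ)) = w) ∧
      (∀ w₁ w₂ : ℂ, ‖w₁‖ ≤ ρ → ‖w₂‖ ≤ ρ →
        ζ * (w₁ + 1) ^ (-(a : ℂ)) = w₁ → ζ * (w₂ + 1) ^ (-(a : ℂ)) = w₂ → w₁ = w₂) := by
    intro ζ hζ
    set T : ℂ → ℂ := fun w => ζ * (w + 1) ^ (-(a : ℂ)) with hTdef
    have habs_cpow : ∀ (w : ℂ) (r : ℝ), ‖(w + 1) ^ ((r : ℂ))‖ =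
        ‖w + 1‖ ^ r := fun w r => Complex.norm_cpow_real (w + 1) r
    have habsT : ∀ w : ℂ, ‖w‖ ≤ ρ → ‖T w‖ < ρ := by
      intro w hw
      have h1 : ‖T w‖ = ‖ζ‖ * ‖w + 1‖ ^ (-a) := by
        rw [hTdef]
        simp only [norm_mul]
        congr 1
        rw [show (-(a : ℂ)) = ((-a : ℝ) : ℂ) by push_cast; ring]
        exact habs_cpow w (-a)
      have h2 : ‖w + 1‖ ^ (-a) ≤ (1 - ρ) ^ (-a) :=
        Real.rpow_le_rpow_of_nonpos h1ρ (habs1 w hw) (neg_nonpos.2 ha.le)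
      have h3 : ‖T w‖ ≤ ‖ζ‖ * (1 - ρ) ^ (-a) := by
        rw [h1]
        exact mul_le_mul_of_nonneg_left h2 (norm_nonneg ζ)
      have h4 : ‖ζ‖ * (1 - ρ) ^ (-a) < M * (1 - ρ) ^ (-a) :=
        mul_lt_mul_of_pos_right hζ (Real.rpow_pos_of_pos h1ρ _)
      have h5 : M * (1 - ρ) ^ (-a) = ρ := by
        rw [hMdef, mul_assoc, ← Real.rpow_add h1ρ]
        simp
      linarith
    set κ : ℝ := a * ‖ζ‖ * (1 - ρ) ^ (-a - 1) with hκdef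
    have hκ0 : 0 ≤ κ := by
      apply mul_nonneg (mul_nonneg ha.le (norm_nonneg ζ))
        (Real.rpow_pos_of_pos h1ρ _).le
    have hκ1 : κ < 1 := by
      have h1 : κ < a * M * (1 - ρ) ^ (-a - 1) := by
        apply mul_lt_mul_of_pos_right _ (Real.rpow_pos_of_pos h1ρ _)
        exact mul_lt_mul_of_pos_left hζ ha
      have h2 : a * M * (1 - ρ) ^ (-a - 1) = (a * ρ) * ((1 - ρ) ^ a * (1 - ρ) ^ (-a - 1)) := by
        rw [hMdef]; ring
      have h3 : (1 - ρ) ^ a * (1 - ρ) ^ (-a - 1) = (1 - ρ)⁻¹ := by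
        rw [← Real.rpow_add h1ρ, show a + (-a - 1) = (-1 : ℝ) by ring, Real.rpow_neg_one]
      have h4 : (a * ρ) * (1 - ρ)⁻¹ = 1 := by
        rw [haρ]
        field_simp
      rw [h2, h3, h4] at h1
      exact h1
    have hlip : LipschitzOnWith κ.toNNReal T (Metric.closedBall (0 : ℂ) ρ) := by
      apply (convex_closedBall (0:ℂ) ρ).lipschitzOnWith_of_nnnorm_hasDerivWithin_le
        (f' := fun w => ζ * (-(a : ℂ) * (w + 1) ^ (-(a : ℂ) - 1) * 1))
      · intro w hw
        have hmem : ‖w‖ ≤ ρ := by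
          simpa [Complex.dist_eq] using hw
        exact ((((hasDerivAt_id w).add_const (1:ℂ)).cpow_const
          (hslit w hmem)).const_mul ζ).hasDerivWithinAt
      · intro w hw
        have hmem : ‖w‖ ≤ ρ := by
          simpa [Complex.dist_eq] using hw
        rw [← norm_toNNReal]
        apply Real.toNNReal_mono
        have h1 : ‖ζ * (-(a : ℂ) * (w + 1) ^ (-(a : ℂ) - 1) * 1)‖ =
            ‖ζ‖ * (a * ‖w + 1‖ ^ (-a - 1)) := by
          rw [mul_one]
          simp only [norm_mul, norm_neg]
          congr 2
          · simpa using abs_of_pos ha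
          · rw [show (-(a : ℂ) - 1) = ((-a - 1 : ℝ) : ℂ) by push_cast; ring]
            exact habs_cpow w (-a - 1)
        rw [h1, hκdef]
        have h2 : ‖w + 1‖ ^ (-a - 1) ≤ (1 - ρ) ^ (-a - 1) :=
          Real.rpow_le_rpow_of_nonpos h1ρ (habs1 w hmem) (by linarith)
        nlinarith [norm_nonneg ζ, Real.rpow_pos_of_pos h1ρ (-a - 1)]
    have hmaps : Set.MapsTo T (Metric.closedBall (0 : ℂ) ρ) (Metric.closedBall (0 : ℂ) ρ) := by
      intro w hw
      have hmem : ‖w‖ ≤ ρ := by simpa [Complex.dist_eq] using hw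
      have := (habsT w hmem).le
      simpa [Complex.dist_eq] using this
    have hcontr : ContractingWith κ.toNNReal (hmaps.restrict T _ _) :=
      ⟨by simpa [Real.toNNReal_lt_one] using hκ1, hlip.mapsToRestrict hmaps⟩
    constructor
    · obtain ⟨w, hws, hwfix, -, -⟩ := hcontr.exists_fixedPoint'
        Metric.isClosed_closedBall.isComplete hmaps
        (Metric.mem_closedBall_self hρ0.le) (edist_ne_top _ _)
      have hmem : ‖w‖ ≤ ρ := by simpa [Complex.dist_eq] using hws
      refine ⟨w, ?_, hwfix⟩
      have := habsT w hmem
      rwa [hwfix] at this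
    · intro w₁ w₂ h₁ h₂ hf₁ hf₂
      have hm₁ : w₁ ∈ Metric.closedBall (0 : ℂ) ρ := by
        simpa [Complex.dist_eq] using h₁
      have hm₂ : w₂ ∈ Metric.closedBall (0 : ℂ) ρ := by
        simpa [Complex.dist_eq] using h₂
      have hd := (lipschitzOnWith_iff_dist_le_mul.mp hlip) w₁ hm₁ w₂ hm₂
      rw [show T w₁ = w₁ from hf₁, show T w₂ = w₂ from hf₂] at hd
      have hcoe : (κ.toNNReal : ℝ) = κ := Real.coe_toNNReal κ hκ0
      rw [hcoe] at hd
      have := dist_nonneg (x := w₁) (y := w₂)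
      have hzero : dist w₁ w₂ ≤ 0 := by nlinarith
      exact dist_le_zero.mp hzero
  -- relation between fixed points and φ
  have hfixφ : ∀ ζ : ℂ, ζ ≠ 0 → ∀ w : ℂ, w + 1 ≠ 0 →
      (ζ * (w + 1) ^ (-(a : ℂ)) = w ↔ φ w = ζ) := by
    intro ζ hζ0 w hw1
    have hpw : (w + 1) ^ ((a : ℂ)) ≠ 0 := by
      simp [Complex.cpow_eq_zero_iff, hw1]
    rw [Complex.cpow_neg, hφdef]
    simp only
    constructor
    · intro h
      have h2 : ζ * (((w + 1) ^ ((a : ℂ)))⁻¹ * (w + 1) ^ ((a : ℂ))) =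
          w * (w + 1) ^ ((a : ℂ)) := by rw [← mul_assoc, h]
      rw [inv_mul_cancel₀ hpw, mul_one] at h2
      exact h2.symm
    · intro h
      rw [← h, mul_assoc, mul_inv_cancel₀ hpw, mul_one]
  -- the target set
  have hzL0 : z ^ L ≠ 0 := pow_ne_zero _ hz
  obtain ⟨hTfin, hTcard⟩ := nth_root_set N hN (z ^ L) hzL0
  have hζM : ∀ ζ : ℂ, ζ ^ N = z ^ L → ‖ζ‖ < M := by
    intro ζ hζ
    by_contra hcon
    push_neg at hcon
    have h1 : M ^ N ≤ ‖ζ‖ ^ N := pow_le_pow_left₀ hM0.le hcon N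
    have h2 : ‖ζ‖ ^ N = ‖z‖ ^ L := by
      rw [← norm_pow, hζ, norm_pow]
    rw [hMN] at h1
    rw [h2] at h1
    linarith
  have hζ0 : ∀ ζ : ℂ, ζ ^ N = z ^ L → ζ ≠ 0 := by
    intro ζ hζ h0
    rw [h0, zero_pow (by omega : N ≠ 0)] at hζ
    exact hzL0 hζ.symm
  -- the bijection
  set S : Set ℂ := {w : ℂ | w ^ N * (w + 1) ^ (L - N) = z ^ L ∧ ‖w‖ < ρ} with hSdef
  have hbij : Set.BijOn φ S {ζ : ℂ | ζ ^ N = z ^ L} := by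
    refine ⟨?_, ?_, ?_⟩
    · rintro w ⟨hweq, hwρ⟩
      show (φ w) ^ N = z ^ L
      rw [hφpow]; exact hweq
    · rintro w₁ ⟨hw₁eq, hw₁ρ⟩ w₂ ⟨hw₂eq, hw₂ρ⟩ heq
      have hζT : (φ w₁) ^ N = z ^ L := by rw [hφpow]; exact hw₁eq
      have hζ0' : φ w₁ ≠ 0 := hζ0 _ hζT
      have hf₁ : φ w₁ * (w₁ + 1) ^ (-(a : ℂ)) = w₁ :=
        (hfixφ (φ w₁) hζ0' w₁ (hne w₁ hw₁ρ.le)).mpr rfl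
      have hf₂ : φ w₁ * (w₂ + 1) ^ (-(a : ℂ)) = w₂ :=
        (hfixφ (φ w₁) hζ0' w₂ (hne w₂ hw₂ρ.le)).mpr heq.symm
      exact (key (φ w₁) (hζM _ hζT)).2 w₁ w₂ hw₁ρ.le hw₂ρ.le hf₁ hf₂
    · intro ζ hζT
      have hζT' : ζ ^ N = z ^ L := hζT
      obtain ⟨w, hwρ, hwfix⟩ := (key ζ (hζM ζ hζT')).1
      have hφw : φ w = ζ := (hfixφ ζ (hζ0 ζ hζT') w (hne w hwρ.le)).mp hwfix
      refine ⟨w, ⟨?_, hwρ⟩, hφw⟩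
      rw [← hφpow w, hφw]
      exact hζT'
  have himg : φ '' S = {ζ : ℂ | ζ ^ N = z ^ L} := hbij.image_eq
  constructor
  · exact Set.Finite.of_finite_image (himg ▸ hTfin) hbij.injOn
  · rw [← hTcard, ← himg]
    exact (Set.ncard_image_of_injOn hbij.injOn).symm

lemma root_cover (N L : ℕ) (hN : 1 ≤ N) (hNL : N < L) (z : ℂ)
    (hzr : ‖z‖ <
      ((N : ℝ) / L) ^ ((N : ℝ) / L) * (1 - (N : ℝ) / L) ^ (1 - (N : ℝ) / L))
    (w : ℂ) (hw : w ^ N * (w + 1) ^ (L - N) = z ^ L) :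
    ‖w‖ < (N : ℝ) / L ∨ ‖w + 1‖ < 1 - (N : ℝ) / L := by
  have hL0 : (0:ℝ) < L := by exact_mod_cast (by omega : 0 < L)
  have hN0 : (0:ℝ) < N := by exact_mod_cast hN
  set ρ : ℝ := (N : ℝ) / L with hρdef
  have hρ0 : 0 < ρ := div_pos hN0 hL0
  have hρ1 : ρ < 1 := (div_lt_one hL0).2 (by exact_mod_cast hNL)
  have h1ρ : 0 < 1 - ρ := by linarith
  have e1 : ((ρ : ℝ) ^ ρ) ^ (L : ℕ) = ρ ^ (N : ℕ) := by
    rw [← Real.rpow_natCast (ρ ^ ρ) L, ← Real.rpow_mul hρ0.le, ← Real.rpow_natCast ρ N]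
    congr 1
    rw [hρdef]; field_simp
  have e2 : ((1 - ρ) ^ (1 - ρ)) ^ (L : ℕ) = (1 - ρ) ^ (L - N : ℕ) := by
    rw [← Real.rpow_natCast ((1-ρ) ^ (1-ρ)) L, ← Real.rpow_mul h1ρ.le,
      ← Real.rpow_natCast (1-ρ) (L - N)]
    congr 1
    rw [Nat.cast_sub hNL.le, hρdef]; field_simp
  have hzL : ‖z‖ ^ L < ρ ^ N * (1 - ρ) ^ (L - N) := by
    have := pow_lt_pow_left₀ hzr (norm_nonneg z) (by omega : L ≠ 0)
    rwa [mul_pow, e1, e2] at this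
  by_contra hcon
  push_neg at hcon
  have h1 : ρ ^ N * (1 - ρ) ^ (L - N) ≤ ‖w‖ ^ N * ‖w + 1‖ ^ (L - N) :=
    mul_le_mul (pow_le_pow_left₀ hρ0.le hcon.1 N) (pow_le_pow_left₀ h1ρ.le hcon.2 _)
      (pow_nonneg h1ρ.le _) (pow_nonneg (norm_nonneg _) _)
  have h2 : ‖w‖ ^ N * ‖w + 1‖ ^ (L - N) = ‖z‖ ^ L := by
    rw [← norm_pow, ← norm_pow, ← norm_mul, hw, norm_pow]
  linarith

lemma neg_transform (N m : ℕ) (v : ℂ) :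
    (-1 - v) ^ N * ((-1 - v) + 1) ^ m = (-1) ^ (N + m) * (v ^ m * (v + 1) ^ N) := by
  have h2 : ((-1 - v : ℂ) + 1) = -v := by ring
  have h1 : (-1 - v : ℂ) = -(v + 1) := by ring
  rw [h2, h1, neg_pow, neg_pow, pow_add]
  ring

/-- For `0 < |z| < 𝕣₀ = ρ^ρ(1−ρ)^{1−ρ}` with `ρ = N/L`, the polynomial
`q_z(w) = w^N(w+1)^{L−N} − z^L` has exactly `L` distinct roots, none on the
line `Re(w) = −ρ`; exactly `L−N` of them satisfy `Re(w) < −ρ` and exactly `N`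
satisfy `Re(w) > −ρ`. Real powers (`rpow`) are used in the definition of `𝕣₀`. -/
theorem roots_split_left_right
    (N L : ℕ) (hN : 1 ≤ N) (hNL : N < L)
    (z : ℂ) (hz : z ≠ 0)
    (hzr : ‖z‖ <
      ((N : ℝ) / L) ^ ((N : ℝ) / L) * (1 - (N : ℝ) / L) ^ (1 - (N : ℝ) / L)) :
    {w : ℂ | w ^ N * (w + 1) ^ (L - N) = z ^ L}.Finite ∧
    {w : ℂ | w ^ N * (w + 1) ^ (L - N) = z ^ L}.ncard = L ∧
    (∀ w : ℂ, w ^ N * (w + 1) ^ (L - N) = z ^ L → w.re ≠ -((N : ℝ) / L)) ∧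
    {w : ℂ | w ^ N * (w + 1) ^ (L - N) = z ^ L ∧ w.re < -((N : ℝ) / L)}.ncard = L - N ∧
    {w : ℂ | w ^ N * (w + 1) ^ (L - N) = z ^ L ∧ -((N : ℝ) / L) < w.re}.ncard = N := by
  have hL0 : (0:ℝ) < L := by exact_mod_cast (by omega : 0 < L)
  have hN0 : (0:ℝ) < N := by exact_mod_cast hN
  have hρ0 : 0 < (N : ℝ) / L := div_pos hN0 hL0
  have hρ1 : (N : ℝ) / L < 1 := (div_lt_one hL0).2 (by exact_mod_cast hNL)
  have hcov := root_cover N L hN hNL z hzr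
  -- disk membership vs real part
  have hdisk_re : ∀ w : ℂ, ‖w‖ < (N : ℝ) / L → -((N : ℝ) / L) < w.re := by
    intro w h
    have h1 := Complex.abs_re_le_norm w
    have h2 := (abs_le.1 h1).1
    linarith
  have hdisk1_re : ∀ w : ℂ, ‖w + 1‖ < 1 - (N : ℝ) / L →
      w.re < -((N : ℝ) / L) := by
    intro w h
    have h1 := Complex.re_le_norm (w + 1)
    rw [Complex.add_re, Complex.one_re] at h1
    linarith
  -- no root on the line
  have hne_re : ∀ w : ℂ, w ^ N * (w + 1) ^ (L - N) = z ^ L → w.re ≠ -((N : ℝ) / L) := by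
    intro w hw h
    rcases hcov w hw with h1 | h1
    · have := hdisk_re w h1
      linarith
    · have := hdisk1_re w h1
      linarith
  -- right side
  have hplus : {w : ℂ | w ^ N * (w + 1) ^ (L - N) = z ^ L ∧ -((N : ℝ) / L) < w.re} =
      {w : ℂ | w ^ N * (w + 1) ^ (L - N) = z ^ L ∧ ‖w‖ < (N : ℝ) / L} := by
    ext w
    constructor
    · rintro ⟨hw, hre⟩
      refine ⟨hw, ?_⟩
      rcases hcov w hw with h1 | h1
      · exact h1
      · exact absurd (hdisk1_re w h1) (by linarith)
    · rintro ⟨hw, habs⟩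
      exact ⟨hw, hdisk_re w habs⟩
  obtain ⟨hfinP, hcardP⟩ := count_disk N L hN hNL z hz hzr
  have hfin_plus : {w : ℂ | w ^ N * (w + 1) ^ (L - N) = z ^ L ∧ -((N : ℝ) / L) < w.re}.Finite := by
    rw [hplus]; exact hfinP
  have hcard_plus : {w : ℂ | w ^ N * (w + 1) ^ (L - N) = z ^ L ∧
      -((N : ℝ) / L) < w.re}.ncard = N := by rw [hplus]; exact hcardP
  -- left side via the transformation w = -1 - v
  have hcastLN : (((L - N : ℕ)) : ℝ) / L = 1 - (N : ℝ) / L := by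
    rw [Nat.cast_sub hNL.le]; field_simp
  have hzr' : ‖-z‖ <
      (((L - N : ℕ) : ℝ) / L) ^ (((L - N : ℕ) : ℝ) / L) *
        (1 - ((L - N : ℕ) : ℝ) / L) ^ (1 - ((L - N : ℕ) : ℝ) / L) := by
    rw [hcastLN, show (1 - (1 - (N : ℝ) / L)) = (N : ℝ) / L by ring, norm_neg,
      mul_comm]
    exact hzr
  obtain ⟨hfinQ, hcardQ⟩ := count_disk (L - N) L (by omega) (by omega) (-z)
    (neg_ne_zero.2 hz) hzr'
  have hsub : L - (L - N) = N := by omega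
  rw [hsub] at hfinQ hcardQ
  set Q : Set ℂ := {v : ℂ | v ^ (L - N) * (v + 1) ^ N = (-z) ^ L ∧
      ‖v‖ < ((L - N : ℕ) : ℝ) / L} with hQdef
  have hminus : {w : ℂ | w ^ N * (w + 1) ^ (L - N) = z ^ L ∧ w.re < -((N : ℝ) / L)} =
      (fun v : ℂ => -1 - v) '' Q := by
    ext w
    constructor
    · rintro ⟨hw, hre⟩
      refine ⟨-1 - w, ⟨?_, ?_⟩, by ring⟩
      · have h1 := neg_transform (L - N) N w
        rw [show (L - N) + N = L by omega] at h1
        rw [h1, hw, ← mul_pow]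
        norm_num
      · rw [hcastLN, show (-1 - w : ℂ) = -(w + 1) by ring, norm_neg]
        rcases hcov w hw with h1 | h1
        · exact absurd (hdisk_re w h1) (by linarith)
        · exact h1
    · rintro ⟨v, ⟨hveq, hvabs⟩, rfl⟩
      constructor
      · have h1 := neg_transform N (L - N) v
        rw [show N + (L - N) = L by omega] at h1
        rw [h1, hveq, ← mul_pow]
        norm_num
      · apply hdisk1_re
        rw [show (-1 - v + 1 : ℂ) = -v by ring, norm_neg, ← hcastLN]
        exact hvabs
  have hinj : Function.Injective (fun v : ℂ => -1 - v) := fun a b h => sub_right_injective h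
  have hfin_minus : {w : ℂ | w ^ N * (w + 1) ^ (L - N) = z ^ L ∧
      w.re < -((N : ℝ) / L)}.Finite := by
    rw [hminus]; exact hfinQ.image _
  have hcard_minus : {w : ℂ | w ^ N * (w + 1) ^ (L - N) = z ^ L ∧
      w.re < -((N : ℝ) / L)}.ncard = L - N := by
    rw [hminus, Set.ncard_image_of_injective _ hinj]; exact hcardQ
  -- total
  have htot : {w : ℂ | w ^ N * (w + 1) ^ (L - N) = z ^ L} =
      {w : ℂ | w ^ N * (w + 1) ^ (L - N) = z ^ L ∧ w.re < -((N : ℝ) / L)} ∪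
      {w : ℂ | w ^ N * (w + 1) ^ (L - N) = z ^ L ∧ -((N : ℝ) / L) < w.re} := by
    ext w
    constructor
    · intro hw
      rcases lt_or_gt_of_ne (hne_re w hw) with h | h
      · exact Or.inl ⟨hw, h⟩
      · exact Or.inr ⟨hw, h⟩
    · rintro (⟨hw, -⟩ | ⟨hw, -⟩) <;> exact hw
  have hdisj : Disjoint
      {w : ℂ | w ^ N * (w + 1) ^ (L - N) = z ^ L ∧ w.re < -((N : ℝ) / L)}
      {w : ℂ | w ^ N * (w + 1) ^ (L - N) = z ^ L ∧ -((N : ℝ) / L) < w.re} := by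
    rw [Set.disjoint_left]
    rintro w ⟨-, h1⟩ ⟨-, h2⟩
    linarith
  refine ⟨?_, ?_, hne_re, hcard_minus, hcard_plus⟩
  · rw [htot]; exact hfin_minus.union hfin_plus
  · rw [htot, Set.ncard_union_eq hdisj hfin_minus hfin_plus, hcard_minus, hcard_plus]
    omega
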